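/- Let 𝒞 be a class of finite graphs that admits low shrubdepth colorings. Then 𝒞 has the strong Erdős–Hajnal property: there exists δ > 0 such that every graph G ∈ 𝒞 with n ≥ 2 vertices contains disjoint vertex subsets A and B, each of size at least δn, such that A is complete or anticomplete to B. -/

import Mathlib

open SimpleGraph

/-- A class of finite graphs, represented as a set of graphs on `Fin n` for each `n`. -/
abbrev GraphClass : Type := ∀ n : ℕ, Set (SimpleGraph (Fin n))

/-- Longest common prefix of two lists. -/
def lcp {I : Type} [DecidableEq I] : List I → List I → List I
  | a :: as, b :: bs => if a = b then a :: lcp as bs else []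
  | _, _ => []

/-- `G` admits a connection model of depth at most `d` with label set `Fin s`:
a rooted tree whose leaves are exactly the vertices of `G` is encoded by assigning to
each vertex `v` (= leaf) the sequence `branch v` of tree edges on the root-to-leaf path
(so no leaf lies on the path of another, and each root-to-leaf path has at most `d`
tree vertices), every vertex gets a label, every internal node `x` (encoded by the
root-to-`x` path) carries a symmetric relation `Z x` on labels, and two distinct
vertices `u, v` of `G` are adjacent iff the pair of their labels lies in `Z x` for
`x` the lowest common ancestor of `u` and `v` (= the longest common prefix of their
branches). -/
def HasConnectionModel {V : Type} (G : SimpleGraph V) (d s : ℕ) : Prop :=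
  ∃ (lab : V → Fin s) (branch : V → List ℕ) (Z : List ℕ → Fin s → Fin s → Prop),
    (∀ u v : V, u ≠ v → ¬ (branch u <+: branch v)) ∧
    (∀ v : V, (branch v).length + 1 ≤ d) ∧
    (∀ x a b, Z x a b → Z x b a) ∧
    (∀ u v : V, u ≠ v → (G.Adj u v ↔ Z (lcp (branch u) (branch v)) (lab u) (lab v)))

/-- The shrubdepth of `G` is at most `s`: `G` has a connection model of depth at most
`s` over a label set of size `s`. -/
def ShrubdepthLE {V : Type} (G : SimpleGraph V) (s : ℕ) : Prop :=
  HasConnectionModel G s s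

/-- A class of finite graphs admits low shrubdepth colorings if for every positive `p`
there are `f` and `s` such that every graph in the class has a vertex coloring with at
most `f` colors in which the union of any (at most) `p` color classes induces a
subgraph of shrubdepth at most `s`. -/
def AdmitsLowShrubdepthColorings (𝒞 : GraphClass) : Prop :=
  ∀ p : ℕ, 0 < p → ∃ f s : ℕ, ∀ n : ℕ, ∀ G ∈ 𝒞 n,
    ∃ col : Fin n → Fin f, ∀ P : Finset (Fin f), P.card ≤ p →
      ShrubdepthLE (G.induce {v : Fin n | col v ∈ P}) s

open Finset in
lemma lcp_cons_same {c : ℕ} {xs ys : List ℕ} : lcp (c::xs) (c::ys) = c :: lcp xs ys := by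
  simp [lcp]

lemma lcp_cons_ne {a b : ℕ} {xs ys : List ℕ} (h : a ≠ b) : lcp (a::xs) (b::ys) = [] := by
  simp [lcp, h]

open Finset in
lemma exists_big_fiber {α β : Type} [Fintype α] [Fintype β] [DecidableEq α] [DecidableEq β]
    [Nonempty β] (g : α → β) :
    ∃ b : β, Fintype.card α ≤ Fintype.card β * (Finset.univ.filter fun a => g a = b).card := by
  obtain ⟨b, -, hb⟩ := Finset.exists_max_image (univ : Finset β)
    (fun b => (Finset.univ.filter fun a => g a = b).card) univ_nonempty
  refine ⟨b, ?_⟩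
  calc Fintype.card α = ∑ c : β, (Finset.univ.filter fun a => g a = c).card := by
        rw [← Finset.card_univ, Finset.card_eq_sum_card_fiberwise (fun a _ => mem_univ (g a))]
    _ ≤ ∑ _c : β, (Finset.univ.filter fun a => g a = b).card :=
        Finset.sum_le_sum (fun c _ => hb c (mem_univ c))
    _ = Fintype.card β * (Finset.univ.filter fun a => g a = b).card := by
        simp [Finset.sum_const, Finset.card_univ, Nat.smul_one_eq_cast]

open Finset in
lemma split_lemma {ι : Type} [DecidableEq ι] (t : Finset ι) (w : ι → ℕ)
    (h : ∀ i ∈ t, 2 * w i < ∑ j ∈ t, w j) (h1 : 1 ≤ ∑ j ∈ t, w j) :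
    ∃ S ⊆ t, (∑ j ∈ t, w j) ≤ 4 * ∑ j ∈ S, w j ∧ (∑ j ∈ t, w j) ≤ 4 * ∑ j ∈ t \ S, w j := by
  set N := ∑ j ∈ t, w j with hN
  have htmem : t ∈ t.powerset.filter (fun S => N ≤ 4 * ∑ j ∈ S, w j) := by
    simp [Finset.mem_filter, Finset.mem_powerset]
    omega
  obtain ⟨S, hSmem, hSmin⟩ := Finset.exists_min_image _ (fun S => ∑ j ∈ S, w j) ⟨t, htmem⟩
  rw [Finset.mem_filter, Finset.mem_powerset] at hSmem
  obtain ⟨hSt, hSbig⟩ := hSmem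
  refine ⟨S, hSt, hSbig, ?_⟩
  by_contra hcon
  push_neg at hcon
  have hsd : ∑ j ∈ t \ S, w j + ∑ j ∈ S, w j = N := Finset.sum_sdiff hSt
  -- find i ∈ S with w i ≥ 1
  have hex : ∃ i ∈ S, 1 ≤ w i := by
    by_contra hno
    push_neg at hno
    have : ∑ j ∈ S, w j = 0 := Finset.sum_eq_zero (fun i hi => by have := hno i hi; omega)
    omega
  obtain ⟨i, hiS, hwi⟩ := hex
  have herase : ¬ (N ≤ 4 * ∑ j ∈ S.erase i, w j) := by
    intro hmem
    have h2 : S.erase i ∈ t.powerset.filter (fun S => N ≤ 4 * ∑ j ∈ S, w j) := by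
      rw [Finset.mem_filter, Finset.mem_powerset]
      exact ⟨(Finset.erase_subset _ _).trans hSt, hmem⟩
    have h3 := hSmin _ h2
    have h4 : ∑ j ∈ S.erase i, w j + w i = ∑ j ∈ S, w j := Finset.sum_erase_add S w hiS
    omega
  have h5 : ∑ j ∈ S.erase i, w j + w i = ∑ j ∈ S, w j := Finset.sum_erase_add S w hiS
  have h6 := h i (hSt hiS)
  omega

open Finset in
lemma key (d : ℕ) : ∀ {V : Type} [Fintype V] [DecidableEq V] (s : ℕ) (G : SimpleGraph V),
    HasConnectionModel G d s → 2 ≤ Fintype.card V →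
    ∃ A B : Finset V, Disjoint A B ∧
      Fintype.card V ≤ 4 * (2*s)^d * A.card ∧
      Fintype.card V ≤ 4 * (2*s)^d * B.card ∧
      ((∀ a ∈ A, ∀ b ∈ B, G.Adj a b) ∨ (∀ a ∈ A, ∀ b ∈ B, ¬ G.Adj a b)) := by
  induction d with
  | zero =>
    intro V _ _ s G hm hcard
    obtain ⟨lab, branch, Z, hpre, hlen, hsym, hadj⟩ := hm
    have : Nonempty V := Fintype.card_pos_iff.mp (by omega)
    obtain ⟨v⟩ := this
    exact absurd (hlen v) (by omega)
  | succ d ih =>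
    intro V _ _ s G hm hcard
    classical
    obtain ⟨lab, branch, Z, hpre, hlen, hsym, hadj⟩ := hm
    have hnt : Nontrivial V := Fintype.one_lt_card_iff_nontrivial.mp (by omega)
    -- s ≥ 1
    have hs : 1 ≤ s := by
      obtain ⟨v⟩ := (inferInstance : Nonempty V).elim (fun v => Nonempty.intro v)
      have := (lab v).isLt
      omega
    set n := Fintype.card V with hn
    by_cases hsmall : n ≤ 4 * (2*s)^(d+1)
    · -- singleton case
      obtain ⟨u, v, huv⟩ := Fintype.exists_pair_of_one_lt_card (α := V) (by omega)
      by_cases hadjuv : G.Adj u v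
      · exact ⟨{u}, {v}, by simp [huv, Ne.symm huv], by simpa using hsmall, by simpa using hsmall,
          Or.inl (by simp_all)⟩
      · exact ⟨{u}, {v}, by simp [huv, Ne.symm huv], by simpa using hsmall, by simpa using hsmall,
          Or.inr (by simp_all)⟩
    · push_neg at hsmall
      -- branches nonempty
      have hne : ∀ v : V, branch v ≠ [] := by
        intro v hv
        obtain ⟨u, hu⟩ := exists_ne v
        exact hpre v u (Ne.symm hu) (hv ▸ List.nil_prefix)
      set hd : V → ℕ := fun v => (branch v).headI with hhd
      have hbr : ∀ v : V, branch v = hd v :: (branch v).tail := by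
        intro v
        cases hb : branch v with
        | nil => exact absurd hb (hne v)
        | cons c t => simp [hhd, hb]
      -- majority label
      haveI : Nonempty (Fin s) := ⟨⟨0, hs⟩⟩
      obtain ⟨a, ha⟩ := exists_big_fiber lab
      simp only [Fintype.card_fin] at ha
      set L : Finset V := Finset.univ.filter fun v => lab v = a with hL
      -- ha : n ≤ s * L.card
      have h2s : 2*s ≤ (2*s)^(d+1) := Nat.le_self_pow (by omega) _
      have hL9 : 9 ≤ L.card := by nlinarith [ha, hsmall, hs]
      set w : ℕ → ℕ := fun i => (L.filter fun v => hd v = i).card with hwdef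
      set t : Finset ℕ := L.image hd with htdef
      have hsum : L.card = ∑ i ∈ t, w i :=
        Finset.card_eq_sum_card_fiberwise (fun v hv => Finset.mem_image_of_mem hd hv)
      by_cases hbig : ∃ i, L.card ≤ 2 * w i
      · -- a big child: recurse
        obtain ⟨i, hi⟩ := hbig
        set S : Set V := {v : V | hd v = i} with hSdef
        haveI : DecidablePred (· ∈ S) := fun v => Classical.dec _
        have hmem : ∀ u : ↥S, hd u.1 = i := fun u => u.2
        have hmodel : HasConnectionModel (G.induce S) d s := by
          refine ⟨fun v => lab v.1, fun v => (branch v.1).tail, fun x => Z (i :: x),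
            ?_, ?_, fun x a' b' h => hsym _ _ _ h, ?_⟩
          · intro u v huv hpref
            apply hpre u.1 v.1 (fun h => huv (Subtype.ext h))
            obtain ⟨r, hr⟩ := hpref
            refine ⟨r, ?_⟩
            rw [hbr u.1, hbr v.1, hmem u, hmem v]
            simpa using hr
          · intro v
            have h1 := hlen v.1
            rw [hbr v.1] at h1
            simp only [List.length_cons] at h1
            show (branch v.1).tail.length + 1 ≤ d
            omega
          · intro u v huv
            have hne' : u.1 ≠ v.1 := fun h => huv (Subtype.ext h)
            have h1 := hadj u.1 v.1 hne'
            have h2 : lcp (branch u.1) (branch v.1)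
                = i :: lcp (branch u.1).tail (branch v.1).tail := by
              conv_lhs => rw [hbr u.1, hbr v.1, hmem u, hmem v]
              exact lcp_cons_same
            rw [h2] at h1
            exact h1
        set C : Finset V := Finset.univ.filter (fun v => hd v = i) with hCdef
        have hcardS : Fintype.card ↥S = C.card := by
          rw [Fintype.card_subtype]
          congr 1
          ext v
          simp [hSdef, hCdef]
        have hwC : w i ≤ C.card := by
          apply Finset.card_le_card
          intro v hv
          simp only [hL, Finset.mem_filter] at hv
          simp [hCdef, hv.2]
        have h2card : 2 ≤ Fintype.card ↥S := by omega
        obtain ⟨A', B', hdisj', hA', hB', hcc'⟩ := ih s (G.induce S) hmodel h2card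
        refine ⟨A'.map (Function.Embedding.subtype _), B'.map (Function.Embedding.subtype _),
          (Finset.disjoint_map _).mpr hdisj', ?_, ?_, ?_⟩
        · rw [Finset.card_map]
          calc n ≤ s * L.card := ha
            _ ≤ s * (2 * w i) := Nat.mul_le_mul_left s hi
            _ ≤ s * (2 * Fintype.card ↥S) := Nat.mul_le_mul_left s (by omega)
            _ ≤ s * (2 * (4 * (2*s)^d * A'.card)) := Nat.mul_le_mul_left s
                (Nat.mul_le_mul_left 2 hA')
            _ = 4 * (2*s)^(d+1) * A'.card := by rw [pow_succ]; ring
        · rw [Finset.card_map]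
          calc n ≤ s * L.card := ha
            _ ≤ s * (2 * w i) := Nat.mul_le_mul_left s hi
            _ ≤ s * (2 * Fintype.card ↥S) := Nat.mul_le_mul_left s (by omega)
            _ ≤ s * (2 * (4 * (2*s)^d * B'.card)) := Nat.mul_le_mul_left s
                (Nat.mul_le_mul_left 2 hB')
            _ = 4 * (2*s)^(d+1) * B'.card := by rw [pow_succ]; ring
        · rcases hcc' with hcc' | hcc'
          · left
            intro x hx y hy
            simp only [Finset.mem_map, Function.Embedding.coe_subtype] at hx hy
            obtain ⟨x', hx', rfl⟩ := hx
            obtain ⟨y', hy', rfl⟩ := hy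
            exact hcc' x' hx' y' hy'
          · right
            intro x hx y hy
            simp only [Finset.mem_map, Function.Embedding.coe_subtype] at hx hy
            obtain ⟨x', hx', rfl⟩ := hx
            obtain ⟨y', hy', rfl⟩ := hy
            exact hcc' x' hx' y' hy'
      · -- all children small: split
        push_neg at hbig
        obtain ⟨S, hSt, hSA, hSB⟩ := split_lemma t w
          (fun i _ => hsum ▸ hbig i) (by omega)
        set A : Finset V := L.filter (fun v => hd v ∈ S) with hAdef
        set B : Finset V := L.filter (fun v => hd v ∉ S) with hBdef
        have hAcard : A.card = ∑ i ∈ S, w i := by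
          rw [Finset.card_eq_sum_card_fiberwise
            (f := hd) (s := A) (t := S) (fun v hv => (Finset.mem_filter.mp (Finset.mem_coe.mp hv)).2)]
          refine Finset.sum_congr rfl (fun i hiS => ?_)
          congr 1
          ext v
          simp only [hAdef, Finset.mem_filter]
          constructor
          · rintro ⟨⟨hvL, -⟩, hvi⟩; exact ⟨hvL, hvi⟩
          · rintro ⟨hvL, hvi⟩; exact ⟨⟨hvL, hvi ▸ hiS⟩, hvi⟩
        have hBcard : (∑ i ∈ t \ S, w i) ≤ B.card := by
          have : B.card = ∑ i ∈ t \ S, (B.filter fun v => hd v = i).card := by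
            refine Finset.card_eq_sum_card_fiberwise (fun v hv => ?_)
            rw [Finset.mem_coe, Finset.mem_sdiff]
            simp only [Finset.mem_coe, hBdef, Finset.mem_filter] at hv
            exact ⟨Finset.mem_image_of_mem hd hv.1, hv.2⟩
          rw [this]
          refine Finset.sum_le_sum (fun i hiS => ?_)
          apply Finset.card_le_card
          intro v hv
          have hiS' := Finset.mem_sdiff.mp hiS
          simp only [hBdef, Finset.mem_filter] at hv ⊢
          have : hd v ∉ S := fun hvS => hiS'.2 (hv.2 ▸ hvS)
          tauto
        have hlabL : ∀ v ∈ L, lab v = a := by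
          intro v hv
          simpa [hL] using hv
        have hkey : ∀ x ∈ A, ∀ y ∈ B, x ≠ y ∧ lcp (branch x) (branch y) = [] := by
          intro x hx y hy
          simp only [hAdef, hBdef, Finset.mem_filter] at hx hy
          have hne' : hd x ≠ hd y := fun h => hy.2 (h ▸ hx.2)
          constructor
          · intro h; exact hne' (by rw [h])
          · rw [hbr x, hbr y]
            exact lcp_cons_ne hne'
        have hLA : L.card ≤ 4 * A.card := by omega
        have hLB : L.card ≤ 4 * B.card := by
          have := hBcard
          omega
        have hsle : s ≤ (2*s)^(d+1) := by omega
        have hsizeA : n ≤ 4 * (2*s)^(d+1) * A.card := by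
          calc n ≤ s * L.card := ha
            _ ≤ s * (4 * A.card) := Nat.mul_le_mul_left s hLA
            _ ≤ (2*s)^(d+1) * (4 * A.card) := Nat.mul_le_mul_right _ hsle
            _ = 4 * (2*s)^(d+1) * A.card := by ring
        have hsizeB : n ≤ 4 * (2*s)^(d+1) * B.card := by
          calc n ≤ s * L.card := ha
            _ ≤ s * (4 * B.card) := Nat.mul_le_mul_left s hLB
            _ ≤ (2*s)^(d+1) * (4 * B.card) := Nat.mul_le_mul_right _ hsle
            _ = 4 * (2*s)^(d+1) * B.card := by ring
        have hdisjAB : Disjoint A B := by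
          rw [Finset.disjoint_left]
          intro v hvA hvB
          simp only [hAdef, hBdef, Finset.mem_filter] at hvA hvB
          exact hvB.2 hvA.2
        by_cases hZ : Z [] a a
        · refine ⟨A, B, hdisjAB, hsizeA, hsizeB, Or.inl ?_⟩
          intro x hx y hy
          obtain ⟨hne', hlcp⟩ := hkey x hx y hy
          rw [hadj x y hne', hlcp, hlabL x (Finset.mem_filter.mp hx).1,
            hlabL y (Finset.mem_filter.mp hy).1]
          exact hZ
        · refine ⟨A, B, hdisjAB, hsizeA, hsizeB, Or.inr ?_⟩
          intro x hx y hy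
          obtain ⟨hne', hlcp⟩ := hkey x hx y hy
          rw [hadj x y hne', hlcp, hlabL x (Finset.mem_filter.mp hx).1,
            hlabL y (Finset.mem_filter.mp hy).1]
          exact hZ

theorem low_shrubdepth_colorings_strong_EH
    (𝒞 : GraphClass) (h𝒞 : AdmitsLowShrubdepthColorings 𝒞) :
    ∃ δ : ℝ, 0 < δ ∧ ∀ n : ℕ, ∀ G ∈ 𝒞 n, 2 ≤ n →
      ∃ A B : Finset (Fin n), Disjoint A B ∧
        δ * (n : ℝ) ≤ (A.card : ℝ) ∧ δ * (n : ℝ) ≤ (B.card : ℝ) ∧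
        ((∀ a ∈ A, ∀ b ∈ B, G.Adj a b) ∨ (∀ a ∈ A, ∀ b ∈ B, ¬ G.Adj a b)) := by
  classical
  obtain ⟨f, s, hfs⟩ := h𝒞 1 (by omega)
  set K : ℕ := 4 * (f+1) * (2*s+2)^(s+1) with hKdef
  have hK0 : 0 < K := by positivity
  refine ⟨(K : ℝ)⁻¹, by positivity, ?_⟩
  intro n G hG hn
  obtain ⟨col, hcol⟩ := hfs n G hG
  by_cases hsmall : n ≤ K
  · -- singleton case
    set u : Fin n := ⟨0, by omega⟩ with hu
    set v : Fin n := ⟨1, by omega⟩ with hv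
    have huv : u ≠ v := by simp [hu, hv, Fin.ext_iff]
    have hδ : (K:ℝ)⁻¹ * n ≤ 1 := by
      rw [inv_mul_le_iff₀ (by positivity), mul_one]
      exact_mod_cast hsmall
    by_cases hA : G.Adj u v
    · exact ⟨{u}, {v}, by simp [huv, Ne.symm huv], by simpa using hδ, by simpa using hδ,
        Or.inl (by simp_all)⟩
    · exact ⟨{u}, {v}, by simp [huv, Ne.symm huv], by simpa using hδ, by simpa using hδ,
        Or.inr (by simp_all)⟩
  · push_neg at hsmall
    have hf : 1 ≤ f := by
      have := (col ⟨0, by omega⟩).isLt; omega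
    haveI : Nonempty (Fin f) := ⟨⟨0, hf⟩⟩
    obtain ⟨c, hc⟩ := exists_big_fiber col
    simp only [Fintype.card_fin] at hc
    set P : Finset (Fin f) := {c} with hPdef
    have hmodel := hcol P (by simp [hPdef])
    haveI : DecidablePred (· ∈ {v : Fin n | col v ∈ P}) :=
      fun v => inferInstanceAs (Decidable (col v ∈ P))
    have hcardVt : Fintype.card ↥{v : Fin n | col v ∈ P}
        = (Finset.univ.filter fun v => col v = c).card := by
      rw [Fintype.card_subtype]
      congr 1
      ext v
      simp [hPdef]
    have hKf : 4 * f ≤ K := by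
      have h1 : 1 ≤ (2*s+2)^(s+1) := Nat.one_le_pow _ _ (by omega)
      calc 4 * f ≤ 4 * (f+1) * 1 := by omega
        _ ≤ 4 * (f+1) * (2*s+2)^(s+1) := Nat.mul_le_mul_left _ h1
    have h2card : 2 ≤ Fintype.card ↥{v : Fin n | col v ∈ P} := by
      rw [hcardVt]
      by_contra hcon
      push_neg at hcon
      have : n ≤ f * 1 := le_trans hc (Nat.mul_le_mul_left f (by omega))
      omega
    obtain ⟨A', B', hdisj', hA', hB', hcc'⟩ := key s s _ hmodel h2card
    have hpow : f * (4 * (2*s)^s) ≤ K := by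
      have h1 : (2*s)^s ≤ (2*s+2)^s := Nat.pow_le_pow_left (by omega) s
      have h2 : (2*s+2)^s ≤ (2*s+2)^(s+1) := Nat.pow_le_pow_right (by omega) (by omega)
      calc f * (4 * (2*s)^s) ≤ (f+1) * (4 * (2*s+2)^(s+1)) :=
            Nat.mul_le_mul (by omega) (Nat.mul_le_mul_left 4 (le_trans h1 h2))
        _ = K := by rw [hKdef]; ring
    have hboundA : n ≤ K * A'.card := by
      calc n ≤ f * (Finset.univ.filter fun v => col v = c).card := hc
        _ = f * Fintype.card ↥{v : Fin n | col v ∈ P} := by rw [hcardVt]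
        _ ≤ f * (4 * (2*s)^s * A'.card) := Nat.mul_le_mul_left f hA'
        _ = f * (4 * (2*s)^s) * A'.card := by ring
        _ ≤ K * A'.card := Nat.mul_le_mul_right _ hpow
    have hboundB : n ≤ K * B'.card := by
      calc n ≤ f * (Finset.univ.filter fun v => col v = c).card := hc
        _ = f * Fintype.card ↥{v : Fin n | col v ∈ P} := by rw [hcardVt]
        _ ≤ f * (4 * (2*s)^s * B'.card) := Nat.mul_le_mul_left f hB'
        _ = f * (4 * (2*s)^s) * B'.card := by ring
        _ ≤ K * B'.card := Nat.mul_le_mul_right _ hpow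
    refine ⟨A'.map (Function.Embedding.subtype _), B'.map (Function.Embedding.subtype _),
      (Finset.disjoint_map _).mpr hdisj', ?_, ?_, ?_⟩
    · rw [Finset.card_map, inv_mul_le_iff₀ (by positivity)]
      exact_mod_cast hboundA
    · rw [Finset.card_map, inv_mul_le_iff₀ (by positivity)]
      exact_mod_cast hboundB
    · rcases hcc' with hcc' | hcc'
      · left
        intro x hx y hy
        simp only [Finset.mem_map, Function.Embedding.coe_subtype] at hx hy
        obtain ⟨x', hx', rfl⟩ := hx
        obtain ⟨y', hy', rfl⟩ := hy
        exact hcc' x' hx' y' hy'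
      · right
        intro x hx y hy
        simp only [Finset.mem_map, Function.Embedding.coe_subtype] at hx hy
        obtain ⟨x', hx', rfl⟩ := hx
        obtain ⟨y', hy', rfl⟩ := hy
        exact hcc' x' hx' y' hy'
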